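/- The function X satisfying the cocycle relation: with notation as above, X(Tω) = a(ω)X(ω) + b(ω) for μ-a.e. ω, where X(ω) = ∑_{n=0}^∞ a(T⁻¹ω)···a(T⁻ⁿω) b(T⁻ⁿ⁻¹ω). -/

import Mathlib

open MeasureTheory Filter

section Helpers

open Set Topology ENNReal

set_option linter.unusedSectionVars false


noncomputable def maxSum {Ω : Type*} (R : Ω → Ω) (h : Ω → ℝ) : ℕ → Ω → ℝ
  | 0 => 0
  | (n+1) => fun ω => max 0 (h ω + maxSum R h n (R ω))

variable {Ω : Type*} [MeasurableSpace Ω] {μ : Measure Ω} [IsProbabilityMeasure μ]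
  {R : Ω → Ω} {h : Ω → ℝ}

lemma maxSum_nonneg (n : ℕ) (ω : Ω) : 0 ≤ maxSum R h n ω := by
  cases n with
  | zero => simp [maxSum]
  | succ n => exact le_max_left _ _

lemma maxSum_mono (n : ℕ) (ω : Ω) : maxSum R h n ω ≤ maxSum R h (n+1) ω := by
  induction n generalizing ω with
  | zero => exact maxSum_nonneg 1 ω
  | succ n ih => exact max_le_max le_rfl (add_le_add le_rfl (ih (R ω)))

lemma birkhoffSum_le_maxSum (k : ℕ) (ω : Ω) : birkhoffSum R h k ω ≤ maxSum R h k ω := by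
  induction k generalizing ω with
  | zero => simp [birkhoffSum, maxSum]
  | succ k ih =>
      rw [birkhoffSum_succ']
      calc h ω + birkhoffSum R h k (R ω) ≤ h ω + maxSum R h k (R ω) := by
            linarith [ih (R ω)]
        _ ≤ _ := le_max_right _ _

lemma measurable_maxSum (hR : Measurable R) (hh : Measurable h) (n : ℕ) :
    Measurable (maxSum R h n) := by
  induction n with
  | zero => exact measurable_const
  | succ n ih => exact measurable_const.max (hh.add (ih.comp hR))

lemma integrable_maxSum (hR : MeasurePreserving R μ μ) (hRm : Measurable R) (hh : Measurable h)
    (hi : Integrable h μ) (n : ℕ) : Integrable (maxSum R h n) μ := by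
  induction n with
  | zero => exact integrable_zero _ _ _
  | succ n ih =>
      have : Integrable (fun ω => maxSum R h n (R ω)) μ :=
        (hR.integrable_comp (measurable_maxSum hRm hh n).aestronglyMeasurable).2 ih
      have h2 := (integrable_const (0:ℝ)).sup (hi.add this)
      exact h2

/-- Garsia-style maximal lemma. -/
lemma maximal_lemma (hR : MeasurePreserving R μ μ) (hRm : Measurable R)
    (hh : Measurable h) (hi : Integrable h μ) (hneg : ∫ ω, h ω ∂μ < 0) :
    0 < μ {ω | ∀ n, birkhoffSum R h n ω ≤ 0} := by
  set E : ℕ → Set Ω := fun n => {ω | 0 < h ω + maxSum R h n (R ω)} with hE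
  have hEmeas : ∀ n, MeasurableSet (E n) :=
    fun n => measurableSet_lt measurable_const (hh.add ((measurable_maxSum hRm hh n).comp hRm))
  have hEmono : Monotone E := by
    refine monotone_nat_of_le_succ fun n ω hω => ?_
    simp only [hE, mem_setOf_eq] at hω ⊢
    linarith [maxSum_mono (R := R) (h := h) n (R ω)]
  -- key inequality
  have hkey : ∀ n, 0 ≤ ∫ ω in E n, h ω ∂μ := by
    intro n
    have hcomp : Integrable (fun ω => maxSum R h n (R ω)) μ :=
      (hR.integrable_comp (measurable_maxSum hRm hh n).aestronglyMeasurable).2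
        (integrable_maxSum hR hRm hh hi n)
    have hpt : ∀ ω, maxSum R h (n+1) ω - maxSum R h n (R ω) ≤ (E n).indicator h ω := by
      intro ω
      by_cases hω : ω ∈ E n
      · rw [indicator_of_mem hω]
        have : maxSum R h (n+1) ω = h ω + maxSum R h n (R ω) :=
          max_eq_right (le_of_lt hω)
        linarith
      · rw [indicator_of_notMem hω]
        have h1 : maxSum R h (n+1) ω = 0 := max_eq_left (not_lt.1 hω)
        have := maxSum_nonneg (R := R) (h := h) n (R ω)
        linarith
    have hint : ∫ ω, (maxSum R h (n+1) ω - maxSum R h n (R ω)) ∂μ ≤ ∫ ω in E n, h ω ∂μ := by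
      rw [← integral_indicator (hEmeas n)]
      exact integral_mono ((integrable_maxSum hR hRm hh hi (n+1)).sub hcomp)
        (hi.indicator (hEmeas n)) hpt
    have heq : ∫ ω, maxSum R h n (R ω) ∂μ = ∫ ω, maxSum R h n ω ∂μ := by
      conv_rhs => rw [← hR.map_eq]
      rw [integral_map hRm.aemeasurable (measurable_maxSum hRm hh n).aestronglyMeasurable]
    have hmono : ∫ ω, maxSum R h n ω ∂μ ≤ ∫ ω, maxSum R h (n+1) ω ∂μ :=
      integral_mono (integrable_maxSum hR hRm hh hi n) (integrable_maxSum hR hRm hh hi (n+1))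
        (maxSum_mono n)
    rw [integral_sub (integrable_maxSum hR hRm hh hi (n+1)) hcomp, heq] at hint
    linarith
  -- conclude
  by_contra hpos
  push_neg at hpos
  have hzero : μ {ω | ∀ n, birkhoffSum R h n ω ≤ 0} = 0 := le_antisymm hpos zero_le
  have hsub : (⋃ n, E n)ᶜ ⊆ {ω | ∀ n, birkhoffSum R h n ω ≤ 0} := by
    intro ω hω k
    have hzero' : ∀ m, maxSum R h m ω = 0 := by
      intro m
      cases m with
      | zero => rfl
      | succ m =>
          have : ω ∉ E m := fun hm => hω (mem_iUnion.2 ⟨m, hm⟩)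
          exact max_eq_left (not_lt.1 this)
    calc birkhoffSum R h k ω ≤ maxSum R h k ω := birkhoffSum_le_maxSum k ω
      _ = 0 := hzero' k
  have hcompl : μ ((⋃ n, E n)ᶜ) = 0 := le_antisymm (le_trans (measure_mono hsub) hpos) zero_le
  have hfull : ∫ ω in (⋃ n, E n), h ω ∂μ = ∫ ω, h ω ∂μ := by
    rw [← setIntegral_univ (μ := μ) (f := h)]
    exact setIntegral_congr_set (ae_eq_univ.2 hcompl)
  have hlim : Tendsto (fun n => ∫ ω in E n, h ω ∂μ) atTop (𝓝 (∫ ω in (⋃ n, E n), h ω ∂μ)) :=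
    tendsto_setIntegral_of_monotone hEmeas hEmono hi.integrableOn
  have : 0 ≤ ∫ ω in (⋃ n, E n), h ω ∂μ := le_of_tendsto_of_tendsto' tendsto_const_nhds hlim hkey
  rw [hfull] at this
  linarith

variable {Ω : Type*} [MeasurableSpace Ω] {μ : Measure Ω} [IsProbabilityMeasure μ]

lemma tsum_meas_le {f : Ω → ℝ} (hm : Measurable f) (hf0 : ∀ x, 0 ≤ f x)
    (hi : Integrable f μ) {ε : ℝ} (hε : 0 < ε) :
    ∑' n : ℕ, μ {x | ε * (n + 1) ≤ f x} ≠ ∞ := by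
  have hAmeas : ∀ n : ℕ, MeasurableSet {x | ε * (n + 1) ≤ f x} := fun n =>
    measurableSet_le measurable_const hm
  have key : ∀ x, ∑' n : ℕ, ({x | ε * (n + 1) ≤ f x}).indicator (fun _ => (1:ℝ≥0∞)) x
      ≤ ENNReal.ofReal (f x / ε) := by
    intro x
    have ht0 : (0:ℝ) ≤ f x / ε := div_nonneg (hf0 x) hε.le
    set K := Nat.floor (f x / ε) with hK
    have hcond : ∀ n : ℕ, ((ε * (n + 1) ≤ f x) ↔ n < K) := by
      intro n
      rw [hK, Nat.lt_iff_add_one_le, Nat.le_floor_iff ht0]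
      rw [mul_comm, ← le_div_iff₀ hε]
      push_cast
      rfl
    have hsum : ∑' n : ℕ, ({x | ε * (n + 1) ≤ f x}).indicator (fun _ => (1:ℝ≥0∞)) x
        = ∑ n ∈ Finset.range K, ({x | ε * (n + 1) ≤ f x}).indicator (fun _ => (1:ℝ≥0∞)) x := by
      apply tsum_eq_sum
      intro n hn
      have hx : x ∉ {x | ε * (n + 1) ≤ f x} := fun hx =>
        hn (Finset.mem_range.2 ((hcond n).1 hx))
      exact indicator_of_notMem hx _
    have hone : ∀ n ∈ Finset.range K, ({x | ε * (n + 1) ≤ f x}).indicator (fun _ => (1:ℝ≥0∞)) x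
        = 1 := by
      intro n hn
      have hx : x ∈ {x | ε * (n + 1) ≤ f x} := (hcond n).2 (Finset.mem_range.1 hn)
      exact indicator_of_mem hx _
    rw [hsum, Finset.sum_congr rfl hone]
    simp only [Finset.sum_const, Finset.card_range, nsmul_eq_mul, mul_one]
    rw [← ENNReal.ofReal_natCast]
    exact ENNReal.ofReal_le_ofReal (Nat.floor_le ht0)
  have hfin : ∫⁻ x, ENNReal.ofReal (f x / ε) ∂μ ≠ ∞ := by
    have heq : ∀ x, ENNReal.ofReal (f x / ε) = ENNReal.ofReal (f x) * (ENNReal.ofReal ε)⁻¹ := by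
      intro x
      rw [div_eq_mul_inv, ENNReal.ofReal_mul (hf0 x), ENNReal.ofReal_inv_of_pos hε]
    simp_rw [heq]
    rw [lintegral_mul_const _ (hm.ennreal_ofReal)]
    apply ENNReal.mul_ne_top
    · exact (lintegral_ofReal_ne_top_iff_integrable hm.aestronglyMeasurable
        (Eventually.of_forall hf0)).2 hi
    · exact ENNReal.inv_ne_top.2 (ENNReal.ofReal_pos.2 hε).ne'
  refine ne_top_of_le_ne_top hfin ?_
  calc ∑' n : ℕ, μ {x | ε * (n + 1) ≤ f x}
      = ∑' n : ℕ, ∫⁻ x, ({x | ε * (n + 1) ≤ f x}).indicator (fun _ => (1:ℝ≥0∞)) x ∂μ := by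
        refine tsum_congr fun n => ?_
        rw [lintegral_indicator_const (hAmeas n), one_mul]
    _ = ∫⁻ x, ∑' n : ℕ, ({x | ε * (n + 1) ≤ f x}).indicator (fun _ => (1:ℝ≥0∞)) x ∂μ := by
        rw [lintegral_tsum fun n => (measurable_const.indicator (hAmeas n)).aemeasurable]
    _ ≤ ∫⁻ x, ENNReal.ofReal (f x / ε) ∂μ := lintegral_mono key

lemma ae_eventually_small {R : Ω → Ω} (hR : MeasurePreserving R μ μ)
    {f : Ω → ℝ} (hm : Measurable f) (hf0 : ∀ x, 0 ≤ f x) (hi : Integrable f μ)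
    {ε : ℝ} (hε : 0 < ε) :
    ∀ᵐ ω ∂μ, ∀ᶠ n : ℕ in atTop, f (R^[n+1] ω) < ε * (n+1) := by
  set s : ℕ → Set Ω := fun n => R^[n+1] ⁻¹' {x | ε * (n + 1) ≤ f x} with hs
  have hmeas : ∀ n, MeasurableSet {x | ε * (n + 1) ≤ f x} := fun n =>
    measurableSet_le measurable_const hm
  have hsum : ∑' n, μ (s n) ≠ ∞ := by
    have : ∀ n, μ (s n) = μ {x | ε * (n + 1) ≤ f x} := fun n =>
      (hR.iterate (n+1)).measure_preimage (hmeas n).nullMeasurableSet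
    rw [tsum_congr this]
    exact tsum_meas_le hm hf0 hi hε
  filter_upwards [ae_eventually_notMem hsum] with ω hω
  filter_upwards [hω] with n hn
  simpa [hs, not_le] using hn

-- (helpers assumed: maximal_lemma, ae_eventually_small — concatenated later)
section Main
variable {Ω : Type*} [MeasurableSpace Ω]

lemma summable_aux {u v w : ℕ → ℝ} {δ : ℝ} (hδ : 0 < δ)
    (hu : ∀ n : ℕ, ∑ i ∈ Finset.range n, u i ≤ -(δ * n))
    (hv : ∀ᶠ n : ℕ in atTop, v n < δ / 2 * (n + 1))
    (hw : ∀ n, |w n| ≤ Real.exp (∑ i ∈ Finset.range n, u i) * Real.exp (v n)) :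
    Summable fun n => |w n| := by
  obtain ⟨N, hN⟩ := eventually_atTop.1 hv
  set r : ℝ := Real.exp (-(δ / 2)) with hr
  have hr0 : 0 ≤ r := (Real.exp_pos _).le
  have hr1 : r < 1 := Real.exp_lt_one_iff.2 (by linarith)
  have hgeom : Summable fun n : ℕ => Real.exp (δ / 2) * r ^ N * r ^ n :=
    (summable_geometric_of_lt_one hr0 hr1).mul_left _
  refine (summable_nat_add_iff N).1 (hgeom.of_nonneg_of_le (fun n => abs_nonneg _) fun n => ?_)
  have hM : N ≤ n + N := le_add_self
  calc |w (n + N)| ≤ Real.exp (∑ i ∈ Finset.range (n + N), u i) * Real.exp (v (n + N)) :=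
        hw (n + N)
    _ ≤ Real.exp (-(δ * ((n + N : ℕ) : ℝ))) * Real.exp (δ / 2 * (((n + N : ℕ) : ℝ) + 1)) := by
        apply mul_le_mul (Real.exp_le_exp.2 (hu (n + N)))
          (Real.exp_le_exp.2 (hN (n + N) hM).le) (Real.exp_pos _).le (Real.exp_pos _).le
    _ = Real.exp (δ / 2) * r ^ N * r ^ n := by
        rw [← Real.exp_add]
        have h1 : (r : ℝ) ^ N = Real.exp (-(δ / 2) * N) := by
          rw [hr, ← Real.exp_nat_mul, mul_comm]
        have h2 : (r : ℝ) ^ n = Real.exp (-(δ / 2) * n) := by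
          rw [hr, ← Real.exp_nat_mul, mul_comm]
        rw [h1, h2, ← Real.exp_add, ← Real.exp_add]
        congr 1
        push_cast
        ring

theorem series_cocycle_relation'
    (μ : Measure Ω) [IsProbabilityMeasure μ] (T S : Ω → Ω)
    (hT : MeasurePreserving T μ μ) (hErg : Ergodic T μ)
    (hSmeas : Measurable S)
    (hST : Function.LeftInverse S T) (hTS : Function.RightInverse S T)
    (a b : Ω → ℝ) (hma : Measurable a) (hmb : Measurable b)
    (ha0 : ∀ ω, a ω ≠ 0)
    (hla : Integrable (fun ω => Real.log |a ω|) μ)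
    (hneg : ∫ ω, Real.log |a ω| ∂μ < 0)
    (hlb : Integrable (fun ω => max (Real.log |b ω|) 0) μ)
    (X : Ω → ℝ)
    (hX : ∀ ω, X ω = ∑' n : ℕ, (∏ i ∈ Finset.range n, a (S^[i + 1] ω)) * b (S^[n + 1] ω)) :
    ∀ᵐ ω ∂μ, X (T ω) = a ω * X ω + b ω := by
  -- S is measure preserving
  have hS : MeasurePreserving S μ μ := by
    refine ⟨hSmeas, ?_⟩
    calc Measure.map S μ = Measure.map S (Measure.map T μ) := by rw [hT.map_eq]
      _ = Measure.map (S ∘ T) μ := Measure.map_map hSmeas hT.measurable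
      _ = μ := by rw [hST.comp_eq_id, Measure.map_id]
  set g : Ω → ℝ := fun ω => Real.log |a ω| with hgdef
  have hgm : Measurable g := Real.measurable_log.comp hma.abs
  set δ : ℝ := -(∫ ω, g ω ∂μ) / 2 with hδdef
  have hδpos : 0 < δ := by
    have : ∫ ω, g ω ∂μ < 0 := hneg
    rw [hδdef]; linarith
  set h : Ω → ℝ := fun ω => g ω + δ with hhdef
  have hhm : Measurable h := hgm.add_const δ
  have hhint : Integrable h μ := hla.add (integrable_const δ)
  have hhneg : ∫ ω, h ω ∂μ < 0 := by
    rw [hhdef]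
    simp only
    rw [integral_add hla (integrable_const δ), integral_const, probReal_univ]
    simp only [ENNReal.toReal_one, one_smul]
    rw [hδdef]
    simp only [hgdef]
    linarith
  set p : ℕ → Ω → ℝ :=
    fun n ω => (∏ i ∈ Finset.range n, a (S^[i + 1] ω)) * b (S^[n + 1] ω) with hpdef
  have hSit : ∀ (i : ℕ) (ω : Ω), S^[i + 1] (T ω) = S^[i] ω := by
    intro i ω
    rw [Function.iterate_succ_apply, hST ω]
  have hq0 : ∀ ω, p 0 (T ω) = b ω := by
    intro ω
    simp only [hpdef, Finset.range_zero, Finset.prod_empty, one_mul]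
    rw [Function.iterate_one, hST ω]
  have hqsucc : ∀ (n : ℕ) (ω : Ω), p (n + 1) (T ω) = a ω * p n ω := by
    intro n ω
    simp only [hpdef]
    have h1 : ∏ i ∈ Finset.range (n + 1), a (S^[i + 1] (T ω))
        = ∏ i ∈ Finset.range (n + 1), a (S^[i] ω) :=
      Finset.prod_congr rfl fun i _ => by rw [hSit i ω]
    have h2 : b (S^[n + 1 + 1] (T ω)) = b (S^[n + 1] ω) := by rw [hSit (n + 1) ω]
    rw [h1, h2, Finset.prod_range_succ']
    simp only [Function.iterate_zero_apply]
    ring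
  have hpm : ∀ n, Measurable (p n) := by
    intro n
    exact (Finset.measurable_prod _ fun i _ => hma.comp (hSmeas.iterate (i + 1))).mul
      (hmb.comp (hSmeas.iterate (n + 1)))
  set G : Set Ω := {ω | Summable fun n => |p n ω|} with hGdef
  have hGmeas : MeasurableSet G := by
    have hGeq : G = ⋃ C : ℕ, ⋂ n : ℕ, {ω | ∑ i ∈ Finset.range n, |p i ω| ≤ C} := by
      ext ω
      simp only [hGdef, mem_setOf_eq, mem_iUnion, mem_iInter]
      constructor
      · intro hs
        refine ⟨Nat.ceil (∑' n, |p n ω|), fun n => ?_⟩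
        exact le_trans (Summable.sum_le_tsum _ (fun i _ => abs_nonneg _) hs) (Nat.le_ceil _)
      · rintro ⟨C, hC⟩
        exact summable_of_sum_range_le (fun n => abs_nonneg _) hC
    rw [hGeq]
    exact MeasurableSet.iUnion fun C => MeasurableSet.iInter fun n =>
      measurableSet_le (Finset.measurable_sum _ fun i _ => (hpm i).abs) measurable_const
  have hGinv : T ⁻¹' G = G := by
    ext ω
    simp only [hGdef, mem_preimage, mem_setOf_eq]
    have e1 : (Summable fun n => |p n (T ω)|) ↔ Summable fun n => |p (n + 1) (T ω)| :=
      (summable_nat_add_iff 1).symm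
    have e2 : (fun n => |p (n + 1) (T ω)|) = fun n => |a ω| * |p n ω| :=
      funext fun n => by rw [hqsucc n ω, abs_mul]
    rw [e1, e2, summable_mul_left_iff (abs_ne_zero.2 (ha0 ω))]
  -- positivity of μ G
  have hA := maximal_lemma hS hSmeas hhm hhint hhneg
  have hAmeas : MeasurableSet {ω | ∀ n, birkhoffSum S h n ω ≤ 0} := by
    have heq : {ω | ∀ n, birkhoffSum S h n ω ≤ 0} = ⋂ n, {ω | birkhoffSum S h n ω ≤ 0} := by
      ext ω; simp only [mem_setOf_eq, mem_iInter]
    rw [heq]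
    refine MeasurableSet.iInter fun n => measurableSet_le ?_ measurable_const
    exact Finset.measurable_sum _ fun i _ => hhm.comp (hSmeas.iterate i)
  have hP : 0 < μ (S ⁻¹' {ω | ∀ n, birkhoffSum S h n ω ≤ 0}) := by
    rw [hS.measure_preimage hAmeas.nullMeasurableSet]; exact hA
  have hfb : Measurable fun ω => max (Real.log |b ω|) 0 :=
    (Real.measurable_log.comp hmb.abs).max measurable_const
  have hB := ae_eventually_small hS hfb (fun x => le_max_right _ _) hlb (half_pos hδpos)
  -- pointwise bound
  have hpbound : ∀ (ω : Ω) (n : ℕ), |p n ω| ≤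
      Real.exp (∑ i ∈ Finset.range n, g (S^[i + 1] ω)) *
        Real.exp (max (Real.log |b (S^[n + 1] ω)|) 0) := by
    intro ω n
    rw [hpdef]
    simp only
    rw [abs_mul, Finset.abs_prod]
    have hprod : ∏ i ∈ Finset.range n, |a (S^[i + 1] ω)|
        = Real.exp (∑ i ∈ Finset.range n, g (S^[i + 1] ω)) := by
      rw [Real.exp_sum]
      exact Finset.prod_congr rfl fun i _ =>
        (Real.exp_log (abs_pos.2 (ha0 _))).symm
    rw [hprod]
    apply mul_le_mul_of_nonneg_left _ (Real.exp_pos _).le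
    by_cases hb : b (S^[n + 1] ω) = 0
    · rw [hb, abs_zero]; exact (Real.exp_pos _).le
    · calc |b (S^[n + 1] ω)| = Real.exp (Real.log |b (S^[n + 1] ω)|) :=
            (Real.exp_log (abs_pos.2 hb)).symm
        _ ≤ _ := Real.exp_le_exp.2 (le_max_left _ _)
  -- a.e. on P', summable
  have hsubset : ∀ᵐ ω ∂μ, ω ∈ S ⁻¹' {ω | ∀ n, birkhoffSum S h n ω ≤ 0} → ω ∈ G := by
    filter_upwards [hB] with ω hω hmem
    have hu : ∀ n : ℕ, ∑ i ∈ Finset.range n, g (S^[i + 1] ω) ≤ -(δ * n) := by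
      intro n
      have h1 : birkhoffSum S h n (S ω) ≤ 0 := hmem n
      have h2 : birkhoffSum S h n (S ω)
          = (∑ i ∈ Finset.range n, g (S^[i + 1] ω)) + n * δ := by
        have hterm : ∀ i : ℕ, h (S^[i] (S ω)) = g (S^[i + 1] ω) + δ := fun i => by
          rw [Function.iterate_succ_apply]
        rw [birkhoffSum, Finset.sum_congr rfl fun i _ => hterm i,
          Finset.sum_add_distrib, Finset.sum_const, Finset.card_range, nsmul_eq_mul]
      rw [h2] at h1
      linarith
    have hv : ∀ᶠ n : ℕ in atTop, max (Real.log |b (S^[n + 1] ω)|) 0 < δ / 2 * (n + 1) := by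
      filter_upwards [hω] with n hn
      exact_mod_cast hn
    exact summable_aux hδpos hu hv (fun n => hpbound ω n)
  have hGpos : 0 < μ G := lt_of_lt_of_le hP (measure_mono_ae hsubset)
  -- ergodicity
  have hae : ∀ᵐ ω ∂μ, ω ∈ G := by
    rcases hErg.ae_empty_or_univ hGmeas hGinv with h1 | h2
    · exfalso
      have : μ G = 0 := by
        rw [measure_congr h1, measure_empty]
      exact absurd this hGpos.ne'
    · have hc : μ Gᶜ = 0 := ae_eq_univ.1 h2
      rw [ae_iff]
      exact hc
  -- conclude
  filter_upwards [hae] with ω hω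
  have habs : Summable fun n => |p n ω| := hω
  have hp' : Summable fun n => p n ω := habs.of_abs
  have hq : Summable fun n => p n (T ω) := by
    apply (summable_nat_add_iff 1).1
    have he : (fun n : ℕ => p (n + 1) (T ω)) = fun n => a ω * p n ω :=
      funext fun n => hqsucc n ω
    rw [he]
    exact hp'.mul_left _
  have hXT : X (T ω) = ∑' n : ℕ, p n (T ω) := hX (T ω)
  have hXω : X ω = ∑' n : ℕ, p n ω := hX ω
  rw [hXT, hXω, Summable.tsum_eq_zero_add hq, hq0 ω]
  have he : (fun n : ℕ => p (n + 1) (T ω)) = fun n => a ω * p n ω :=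
    funext fun n => hqsucc n ω
  rw [he, tsum_mul_left]
  ring

end Main

end Helpers

/-- With `X(ω) = ∑ₙ a(T⁻¹ω)⋯a(T⁻ⁿω) b(T⁻ⁿ⁻¹ω)`, one has the cocycle relation
`X(Tω) = a(ω) X(ω) + b(ω)` for a.e. `ω`. -/
theorem series_cocycle_relation {Ω : Type*} [MeasurableSpace Ω]
    (μ : Measure Ω) [IsProbabilityMeasure μ] (T S : Ω → Ω)
    (hT : MeasurePreserving T μ μ) (hErg : Ergodic T μ)
    (hSmeas : Measurable S)
    (hST : Function.LeftInverse S T) (hTS : Function.RightInverse S T)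
    (a b : Ω → ℝ) (hma : Measurable a) (hmb : Measurable b)
    (ha0 : ∀ ω, a ω ≠ 0)
    (hla : Integrable (fun ω => Real.log |a ω|) μ)
    (hneg : ∫ ω, Real.log |a ω| ∂μ < 0)
    (hlb : Integrable (fun ω => max (Real.log |b ω|) 0) μ)
    (X : Ω → ℝ)
    (hX : ∀ ω, X ω = ∑' n : ℕ, (∏ i ∈ Finset.range n, a (S^[i + 1] ω)) * b (S^[n + 1] ω)) :
    ∀ᵐ ω ∂μ, X (T ω) = a ω * X ω + b ω :=
  series_cocycle_relation' μ T S hT hErg hSmeas hST hTS a b hma hmb ha0 hla hneg hlb X hX
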